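/- (Corollary 1 of the paper.) Let α, β, γ, δ be real numbers with α·δ − β·γ ≠ 0, let M ∈ Matrix (Fin 3) (Fin 3) ℝ be invertible, and let q₁, q₂ : Fin 3 → ℝ[X] be triples of polynomials, each of whose three components has only unit common divisors (in particular, not all components are zero). Suppose there exists a ∈ RatFunc ℝ such that for every i ∈ Fin 3, algebraMap ((M·q₁) i) = a * Polynomial.aeval ψ (q₂ i) in RatFunc ℝ. Then max over i of natDegree (q₁ i) equals max over i of natDegree (q₂ i). -/

import Mathlib

open Polynomial

/-- The Möbius transformation `ψ = (αX+β)/(γX+δ)` as an element of `RatFunc ℝ`. -/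
noncomputable def mobius (α β γ δ : ℝ) : RatFunc ℝ :=
  (algebraMap (Polynomial ℝ) (RatFunc ℝ) (C α * X + C β)) /
  (algebraMap (Polynomial ℝ) (RatFunc ℝ) (C γ * X + C δ))

noncomputable def TT (A D : Polynomial ℝ) (N : ℕ) (q : Polynomial ℝ) : Polynomial ℝ :=
  ∑ k ∈ Finset.range (N+1), q.coeff k • (A^k * D^(N-k))

lemma lin_ne_zero (γ δ : ℝ) (h : ¬(γ = 0 ∧ δ = 0)) : (C γ * X + C δ : Polynomial ℝ) ≠ 0 := by
  intro h0
  refine h ⟨?_, ?_⟩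
  · have := congrArg (fun p => Polynomial.coeff p 1) h0; simpa using this
  · have := congrArg (fun p => Polynomial.coeff p 0) h0; simpa using this

lemma aeval_div_mul (A D : Polynomial ℝ) (hD : D ≠ 0) (N : ℕ) (q : Polynomial ℝ)
    (hq : q.natDegree ≤ N) :
    (Polynomial.aeval ((algebraMap (Polynomial ℝ) (RatFunc ℝ) A) /
        (algebraMap (Polynomial ℝ) (RatFunc ℝ) D)) q)
      * (algebraMap (Polynomial ℝ) (RatFunc ℝ) D)^N
    = algebraMap (Polynomial ℝ) (RatFunc ℝ) (TT A D N q) := by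
  have hD' : (algebraMap (Polynomial ℝ) (RatFunc ℝ)) D ≠ 0 := RatFunc.algebraMap_ne_zero hD
  conv_lhs => rw [q.as_sum_range' (N+1) (Nat.lt_succ_of_le hq)]
  rw [map_sum, Finset.sum_mul, TT, map_sum]
  refine Finset.sum_congr rfl fun k hk => ?_
  have hkN : k ≤ N := Nat.lt_succ_iff.mp (Finset.mem_range.mp hk)
  rw [aeval_monomial, Algebra.smul_def, map_mul, map_mul, map_pow, map_pow, div_pow,
    ← IsScalarTower.algebraMap_apply, pow_sub₀ _ hD' hkN]
  field_simp

lemma TT_deg (A D : Polynomial ℝ) (hA : A.natDegree ≤ 1) (hD : D.natDegree ≤ 1)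
    (N : ℕ) (q : Polynomial ℝ) : (TT A D N q).natDegree ≤ N := by
  refine Polynomial.natDegree_sum_le_of_forall_le _ _ fun k hk => ?_
  have hkN : k ≤ N := Nat.lt_succ_iff.mp (Finset.mem_range.mp hk)
  refine le_trans (natDegree_smul_le _ _) (le_trans (natDegree_mul_le) ?_)
  calc (A^k).natDegree + (D^(N-k)).natDegree
      ≤ k * A.natDegree + (N-k) * D.natDegree :=
        Nat.add_le_add natDegree_pow_le natDegree_pow_le
    _ ≤ k * 1 + (N-k) * 1 := Nat.add_le_add (Nat.mul_le_mul_left _ hA) (Nat.mul_le_mul_left _ hD)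
    _ ≤ N := by omega

lemma TT_eval (A D : Polynomial ℝ) (N : ℕ) (q : Polynomial ℝ) (x : ℝ)
    (hDx : D.eval x ≠ 0) (hq : q.natDegree ≤ N) :
    (TT A D N q).eval x = (D.eval x)^N * q.eval (A.eval x / D.eval x) := by
  conv_rhs => rw [q.as_sum_range' (N+1) (Nat.lt_succ_of_le hq)]
  rw [TT, eval_finset_sum, eval_finset_sum, Finset.mul_sum]
  refine Finset.sum_congr rfl fun k hk => ?_
  have hkN : k ≤ N := Nat.lt_succ_iff.mp (Finset.mem_range.mp hk)
  rw [eval_smul, smul_eq_mul, eval_mul, eval_pow, eval_pow, eval_monomial, div_pow,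
    pow_sub₀ _ hDx hkN]
  field_simp

lemma aeval_mobius_ne_zero (α β γ δ : ℝ) (h : α * δ - β * γ ≠ 0)
    (q : Polynomial ℝ) (hq : q ≠ 0) : Polynomial.aeval (mobius α β γ δ) q ≠ 0 := by
  intro h0
  set A : Polynomial ℝ := C α * X + C β with hAdef
  set D : Polynomial ℝ := C γ * X + C δ with hDdef
  have hD : D ≠ 0 := lin_ne_zero γ δ (by rintro ⟨h1, h2⟩; rw [h1, h2] at h; simp at h)
  have key := aeval_div_mul A D hD q.natDegree q le_rfl
  rw [show (algebraMap (Polynomial ℝ) (RatFunc ℝ) A) / (algebraMap (Polynomial ℝ) (RatFunc ℝ) D)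
      = mobius α β γ δ from rfl, h0, zero_mul] at key
  have hTT : TT A D q.natDegree q = 0 := by
    have := key.symm
    rwa [map_eq_zero_iff _ (IsFractionRing.injective (Polynomial ℝ) (RatFunc ℝ))] at this
  have hS : ({x : ℝ | D.IsRoot x}ᶜ).Infinite :=
    Set.Finite.infinite_compl (Polynomial.finite_setOf_isRoot hD)
  set f : ℝ → ℝ := fun x => A.eval x / D.eval x with hf
  have hroot : ∀ x ∈ {x : ℝ | D.IsRoot x}ᶜ, q.IsRoot (f x) := by
    intro x hx
    have hDx : D.eval x ≠ 0 := hx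
    have h1 : (TT A D q.natDegree q).eval x = 0 := by rw [hTT]; simp
    rw [TT_eval A D q.natDegree q x hDx le_rfl] at h1
    rcases mul_eq_zero.mp h1 with h2 | h2
    · exact absurd h2 (pow_ne_zero _ hDx)
    · exact h2
  have hinj : Set.InjOn f ({x : ℝ | D.IsRoot x}ᶜ) := by
    intro x1 h1 x2 h2 hfx
    have hD1 : D.eval x1 ≠ 0 := h1
    have hD2 : D.eval x2 ≠ 0 := h2
    rw [hf] at hfx
    simp only [div_eq_div_iff hD1 hD2] at hfx
    have hA1 : A.eval x1 = α * x1 + β := by simp [hAdef]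
    have hA2 : A.eval x2 = α * x2 + β := by simp [hAdef]
    have hDe1 : D.eval x1 = γ * x1 + δ := by simp [hDdef]
    have hDe2 : D.eval x2 = γ * x2 + δ := by simp [hDdef]
    rw [hA1, hA2, hDe1, hDe2] at hfx
    have h3 : (α * δ - β * γ) * (x1 - x2) = 0 := by linear_combination hfx
    rcases mul_eq_zero.mp h3 with h4 | h4
    · exact absurd h4 h
    · linarith
  have : {y : ℝ | q.IsRoot y}.Infinite := by
    refine Set.Infinite.mono ?_ (hS.image hinj)
    rintro y ⟨x, hx, rfl⟩
    exact hroot x hx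
  exact hq (Polynomial.eq_zero_of_infinite_isRoot q this)

lemma mat_sum (P Q : Matrix (Fin 3) (Fin 3) ℝ) (v : Fin 3 → Polynomial ℝ) (l : Fin 3) :
    ∑ i, P l i • ∑ j, Q i j • v j = ∑ j, (P * Q) l j • v j := by
  simp_rw [Finset.smul_sum, smul_smul, Matrix.mul_apply, Finset.sum_smul]
  rw [Finset.sum_comm]

lemma rec_lemma (M : Matrix (Fin 3) (Fin 3) ℝ) (hM : IsUnit M) (q₁ : Fin 3 → Polynomial ℝ)
    (l : Fin 3) : q₁ l = ∑ i, M⁻¹ l i • ∑ j, M i j • q₁ j := by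
  rw [mat_sum M⁻¹ M q₁ l, Matrix.nonsing_inv_mul M ((Matrix.isUnit_iff_isUnit_det M).mp hM)]
  simp [Matrix.one_apply]

lemma common_unit (M : Matrix (Fin 3) (Fin 3) ℝ) (hM : IsUnit M) (q₁ : Fin 3 → Polynomial ℝ)
    (hc1 : ∀ d : Polynomial ℝ, (∀ i, d ∣ q₁ i) → IsUnit d)
    (d : Polynomial ℝ) (hd : ∀ i, d ∣ ∑ j, M i j • q₁ j) : IsUnit d := by
  refine hc1 d fun l => ?_
  rw [rec_lemma M hM q₁ l]
  exact Finset.dvd_sum fun i _ => by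
    rw [Polynomial.smul_eq_C_mul]; exact (hd i).mul_left _

lemma core (α β γ δ : ℝ) (h : α * δ - β * γ ≠ 0)
    (M : Matrix (Fin 3) (Fin 3) ℝ) (hM : IsUnit M)
    (q₁ q₂ : Fin 3 → Polynomial ℝ)
    (hc1 : ∀ d : Polynomial ℝ, (∀ i, d ∣ q₁ i) → IsUnit d)
    (a : RatFunc ℝ)
    (heq : ∀ i, algebraMap (Polynomial ℝ) (RatFunc ℝ) (∑ j, M i j • q₁ j)
      = a * Polynomial.aeval (mobius α β γ δ) (q₂ i)) :
    (Finset.univ.sup fun i => (q₁ i).natDegree)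
      ≤ (Finset.univ.sup fun i => (q₂ i).natDegree) := by
  classical
  set A : Polynomial ℝ := C α * X + C β with hAdef
  set D : Polynomial ℝ := C γ * X + C δ with hDdef
  have hA1 : A.natDegree ≤ 1 := by rw [hAdef]; compute_degree
  have hD1 : D.natDegree ≤ 1 := by rw [hDdef]; compute_degree
  have hD : D ≠ 0 := lin_ne_zero γ δ (by rintro ⟨h1, h2⟩; rw [h1, h2] at h; simp at h)
  have hD' : (algebraMap (Polynomial ℝ) (RatFunc ℝ)) D ≠ 0 := RatFunc.algebraMap_ne_zero hD
  set n := Finset.univ.sup (fun i => (q₂ i).natDegree) with hn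
  set s : Fin 3 → Polynomial ℝ := fun i => ∑ j, M i j • q₁ j with hs
  set R : Fin 3 → Polynomial ℝ := fun i => TT A D n (q₂ i) with hR
  have hgs : ∀ d : Polynomial ℝ, (∀ i, d ∣ s i) → IsUnit d := common_unit M hM q₁ hc1
  have key : ∀ i, algebraMap (Polynomial ℝ) (RatFunc ℝ) (s i)
      * (algebraMap (Polynomial ℝ) (RatFunc ℝ) D)^n
      = a * algebraMap (Polynomial ℝ) (RatFunc ℝ) (R i) := by
    intro i
    rw [hs, heq i, mul_assoc]
    congr 1
    exact aeval_div_mul A D hD n (q₂ i)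
      (hn ▸ Finset.le_sup (f := fun i => (q₂ i).natDegree) (Finset.mem_univ i))
  have poly : ∀ i, s i * a.denom * D^n = a.num * R i := by
    intro i
    apply IsFractionRing.injective (Polynomial ℝ) (RatFunc ℝ)
    have h1 : a * algebraMap (Polynomial ℝ) (RatFunc ℝ) a.denom
        = algebraMap (Polynomial ℝ) (RatFunc ℝ) a.num := by
      nth_rewrite 1 [← RatFunc.num_div_denom a]
      rw [div_mul_cancel₀ _ (RatFunc.algebraMap_ne_zero a.denom_ne_zero)]
    simp only [map_mul, map_pow]
    calc algebraMap (Polynomial ℝ) (RatFunc ℝ) (s i)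
          * algebraMap (Polynomial ℝ) (RatFunc ℝ) a.denom
          * (algebraMap (Polynomial ℝ) (RatFunc ℝ) D)^n
        = algebraMap (Polynomial ℝ) (RatFunc ℝ) (s i)
          * (algebraMap (Polynomial ℝ) (RatFunc ℝ) D)^n
          * algebraMap (Polynomial ℝ) (RatFunc ℝ) a.denom := by ring
      _ = a * algebraMap (Polynomial ℝ) (RatFunc ℝ) (R i)
          * algebraMap (Polynomial ℝ) (RatFunc ℝ) a.denom := by rw [key i]
      _ = algebraMap (Polynomial ℝ) (RatFunc ℝ) a.num
          * algebraMap (Polynomial ℝ) (RatFunc ℝ) (R i) := by rw [← h1]; ring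
  have hnum : a.num ≠ 0 := by
    intro h0
    have hzero : ∀ i, s i = 0 := by
      intro i
      have := poly i
      rw [h0, zero_mul] at this
      rcases mul_eq_zero.mp this with h2 | h2
      · rcases mul_eq_zero.mp h2 with h3 | h3
        · exact h3
        · exact absurd h3 a.denom_ne_zero
      · exact absurd h2 (pow_ne_zero _ hD)
    exact Polynomial.not_isUnit_X (hgs X fun i => (hzero i) ▸ dvd_zero X)
  have hdvd : a.num ∣ D^n := by
    have hcop := RatFunc.isCoprime_num_denom a
    have h1 : ∀ i, a.num ∣ s i * normalize (D^n) := by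
      intro i
      have h1a : a.num ∣ (s i * D^n) * a.denom := by
        rw [show (s i * D^n) * a.denom = s i * a.denom * D^n by ring, poly i]
        exact Dvd.intro _ rfl
      exact (hcop.dvd_of_dvd_mul_right h1a).trans
        (Associated.mul_left _ (normalize_associated _).symm).dvd
    have h2 : a.num ∣ gcd (s 0 * normalize (D^n))
        (gcd (s 1 * normalize (D^n)) (s 2 * normalize (D^n))) :=
      dvd_gcd (h1 0) (dvd_gcd (h1 1) (h1 2))
    rw [gcd_mul_right, normalize_idem, gcd_mul_right, normalize_idem] at h2
    have hu : IsUnit (gcd (s 0) (gcd (s 1) (s 2))) := by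
      refine hgs _ fun i => ?_
      fin_cases i
      · exact gcd_dvd_left _ _
      · exact (gcd_dvd_right _ _).trans (gcd_dvd_left _ _)
      · exact (gcd_dvd_right _ _).trans (gcd_dvd_right _ _)
    exact dvd_normalize_iff.mp ((hu.dvd_mul_left).mp h2)
  have hdegp : a.num.natDegree ≤ n * D.natDegree := by
    have := Polynomial.natDegree_le_of_dvd hdvd (pow_ne_zero _ hD)
    rwa [Polynomial.natDegree_pow] at this
  have hsdeg : ∀ i, (s i).natDegree ≤ n := by
    intro i
    by_cases hsi : s i = 0
    · simp [hsi]
    · have hRi : a.num * R i ≠ 0 := by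
        rw [← poly i]
        exact mul_ne_zero (mul_ne_zero hsi a.denom_ne_zero) (pow_ne_zero _ hD)
      have hRne : R i ≠ 0 := fun h0 => hRi (by rw [h0, mul_zero])
      have e1 : (s i).natDegree + a.denom.natDegree + n * D.natDegree
          = a.num.natDegree + (R i).natDegree := by
        have := congrArg Polynomial.natDegree (poly i)
        rwa [Polynomial.natDegree_mul (mul_ne_zero hsi a.denom_ne_zero) (pow_ne_zero _ hD),
          Polynomial.natDegree_mul hsi a.denom_ne_zero, Polynomial.natDegree_pow,
          Polynomial.natDegree_mul hnum hRne] at this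
      have e2 : (R i).natDegree ≤ n := TT_deg A D hA1 hD1 n (q₂ i)
      omega
  refine Finset.sup_le fun l _ => ?_
  rw [rec_lemma M hM q₁ l]
  exact Polynomial.natDegree_sum_le_of_forall_le _ _ fun i _ =>
    le_trans (natDegree_smul_le _ _) (hsdeg i)

/-- Corollary 1 of the paper: if the surfaces are affinely equivalent, the
maximal degrees of the direction triples coincide. -/
theorem stmt_8 (α β γ δ : ℝ) (h : α * δ - β * γ ≠ 0)
    (M : Matrix (Fin 3) (Fin 3) ℝ) (hM : IsUnit M)
    (q₁ q₂ : Fin 3 → Polynomial ℝ)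
    (hc1 : ∀ d : Polynomial ℝ, (∀ i, d ∣ q₁ i) → IsUnit d)
    (hc2 : ∀ d : Polynomial ℝ, (∀ i, d ∣ q₂ i) → IsUnit d)
    (a : RatFunc ℝ)
    (heq : ∀ i, algebraMap (Polynomial ℝ) (RatFunc ℝ) (∑ j, M i j • q₁ j)
      = a * Polynomial.aeval (mobius α β γ δ) (q₂ i)) :
    (Finset.univ.sup fun i => (q₁ i).natDegree)
      = (Finset.univ.sup fun i => (q₂ i).natDegree) := by
  classical
  have h' : δ * α - (-β) * (-γ) ≠ 0 := by intro h0; exact h (by linarith)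
  set ψ' : RatFunc ℝ := mobius δ (-β) (-γ) α with hψ'def
  set g : Polynomial ℝ →+* RatFunc ℝ := (Polynomial.aeval ψ').toRingHom with hgdef
  have hginj : Function.Injective g := by
    rw [injective_iff_map_eq_zero]
    intro q hq0
    by_contra hq
    exact aeval_mobius_ne_zero δ (-β) (-γ) α h' q hq hq0
  set Φ : RatFunc ℝ →+* RatFunc ℝ := IsFractionRing.lift hginj with hΦdef
  have hΦalg : ∀ p : Polynomial ℝ,
      Φ (algebraMap (Polynomial ℝ) (RatFunc ℝ) p) = Polynomial.aeval ψ' p := fun p =>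
    IsFractionRing.lift_algebraMap hginj p
  -- Φ maps ψ to X
  set Δ : ℝ := α * δ - β * γ with hΔdef
  set A' : Polynomial ℝ := C δ * X + C (-β) with hA'def
  set D' : Polynomial ℝ := C (-γ) * X + C α with hD'def
  have hD'ne : D' ≠ 0 := by
    refine lin_ne_zero (-γ) α ?_
    rintro ⟨h1, h2⟩
    apply h
    rw [hΔdef, h2, show γ = 0 by linarith]
    ring
  have hD'alg : (algebraMap (Polynomial ℝ) (RatFunc ℝ)) D' ≠ 0 := RatFunc.algebraMap_ne_zero hD'ne
  have hCΔ : (algebraMap (Polynomial ℝ) (RatFunc ℝ)) (C Δ) ≠ 0 :=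
    RatFunc.algebraMap_ne_zero (Polynomial.C_ne_zero.mpr h)
  have hψe : ψ' = (algebraMap (Polynomial ℝ) (RatFunc ℝ) A')
      / (algebraMap (Polynomial ℝ) (RatFunc ℝ) D') := rfl
  have e0 : ∀ c : ℝ, algebraMap ℝ (RatFunc ℝ) c
      = algebraMap (Polynomial ℝ) (RatFunc ℝ) (C c) := fun c => by
    rw [IsScalarTower.algebraMap_apply ℝ (Polynomial ℝ) (RatFunc ℝ)]
    norm_cast
  have e1 : Polynomial.aeval ψ' (C α * X + C β : Polynomial ℝ)
      = algebraMap (Polynomial ℝ) (RatFunc ℝ) (C Δ * X)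
        / algebraMap (Polynomial ℝ) (RatFunc ℝ) D' := by
    have pid : C α * A' + C β * D' = C Δ * X := by
      rw [hA'def, hD'def, hΔdef]
      simp only [map_sub, map_mul, map_neg]
      ring
    simp only [map_add, map_mul, aeval_C, aeval_X, hψe, e0]
    have pid' := congrArg (algebraMap (Polynomial ℝ) (RatFunc ℝ)) pid
    simp only [map_add, map_mul, RatFunc.algebraMap_C, RatFunc.algebraMap_X] at pid'
    rw [eq_div_iff hD'alg]
    field_simp
    simp only [RatFunc.algebraMap_C, RatFunc.algebraMap_X]
    linear_combination pid'
  have e2 : Polynomial.aeval ψ' (C γ * X + C δ : Polynomial ℝ)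
      = algebraMap (Polynomial ℝ) (RatFunc ℝ) (C Δ)
        / algebraMap (Polynomial ℝ) (RatFunc ℝ) D' := by
    have pid : C γ * A' + C δ * D' = C Δ := by
      rw [hA'def, hD'def, hΔdef]
      simp only [map_sub, map_mul, map_neg]
      ring
    simp only [map_add, map_mul, aeval_C, aeval_X, hψe, e0]
    have pid' := congrArg (algebraMap (Polynomial ℝ) (RatFunc ℝ)) pid
    simp only [map_add, map_mul, RatFunc.algebraMap_C, RatFunc.algebraMap_X] at pid'
    rw [eq_div_iff hD'alg]
    field_simp
    simp only [RatFunc.algebraMap_C, RatFunc.algebraMap_X]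
    linear_combination pid'
  have hψX : Φ (mobius α β γ δ) = algebraMap (Polynomial ℝ) (RatFunc ℝ) X := by
    rw [mobius, map_div₀, hΦalg, hΦalg, e1, e2, div_div_div_cancel_right₀ hD'alg, map_mul,
      mul_comm, mul_div_assoc, div_self hCΔ, mul_one]
  have hΦaeval : ∀ q : Polynomial ℝ, Φ (Polynomial.aeval (mobius α β γ δ) q)
      = algebraMap (Polynomial ℝ) (RatFunc ℝ) q := by
    intro q
    rw [Polynomial.aeval_def, Polynomial.hom_eval₂]
    have hc : Φ.comp (algebraMap ℝ (RatFunc ℝ)) = algebraMap ℝ (RatFunc ℝ) := by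
      refine RingHom.ext fun c => ?_
      rw [RingHom.comp_apply, e0, hΦalg, aeval_C, e0]
    rw [hc, hψX, ← Polynomial.aeval_def, Polynomial.aeval_algebraMap_apply,
      Polynomial.aeval_X_left_apply]
  -- a is nonzero
  set s : Fin 3 → Polynomial ℝ := fun i => ∑ j, M i j • q₁ j with hs
  have hgs : ∀ d : Polynomial ℝ, (∀ i, d ∣ s i) → IsUnit d := common_unit M hM q₁ hc1
  have ha : a ≠ 0 := by
    intro h0
    have hzero : ∀ i, s i = 0 := by
      intro i
      have := heq i
      rw [h0, zero_mul, map_eq_zero_iff _ (IsFractionRing.injective (Polynomial ℝ) (RatFunc ℝ))]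
        at this
      exact this
    exact Polynomial.not_isUnit_X (hgs X fun i => (hzero i) ▸ dvd_zero X)
  have hΦa : Φ a ≠ 0 := fun h0 => ha (Φ.injective (by rw [h0, map_zero]))
  -- transformed relation
  have hA : ∀ k, Polynomial.aeval ψ' (s k)
      = Φ a * algebraMap (Polynomial ℝ) (RatFunc ℝ) (q₂ k) := by
    intro k
    have := congrArg Φ (heq k)
    rwa [hΦalg, map_mul, hΦaeval] at this
  have heq' : ∀ i, algebraMap (Polynomial ℝ) (RatFunc ℝ) (∑ j, M⁻¹ i j • q₂ j)
      = (Φ a)⁻¹ * Polynomial.aeval ψ' (q₁ i) := by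
    intro i
    have hB : Polynomial.aeval ψ' (q₁ i)
        = Φ a * algebraMap (Polynomial ℝ) (RatFunc ℝ) (∑ j, M⁻¹ i j • q₂ j) := by
      conv_lhs => rw [rec_lemma M hM q₁ i]
      rw [map_sum, map_sum, Finset.mul_sum]
      refine Finset.sum_congr rfl fun k _ => ?_
      rw [Polynomial.smul_eq_C_mul, Polynomial.smul_eq_C_mul, map_mul, map_mul, aeval_C, hA k,
        e0]
      ring
    rw [hB, inv_mul_cancel_left₀ hΦa]
  have hM' : IsUnit M⁻¹ := Matrix.isUnit_nonsing_inv_iff.mpr hM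
  exact le_antisymm (core α β γ δ h M hM q₁ q₂ hc1 a heq)
    (core δ (-β) (-γ) α h' M⁻¹ hM' q₂ q₁ hc2 (Φ a)⁻¹ heq')
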